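/- arXiv:2210.13694 — 2 statements merged into one kernel-verified Lean document; each statement's English description precedes it below -/
import Mathlib

section
/- Suppose f is worst-case monotone and worst-case submodular and f(∅) = 0, let B be a positive integer budget with c(e) ≤ B for every e ∈ E, and let π^g be the budgeted worst-case density-greedy policy. Then for every adaptive policy π* with c_wc(π*) ≤ B, max{ f_wc(π^g), max_{e ∈ E} Δwc(e|∅) } ≥ ((1 − 1/e)/2) · f_wc(π*). -/
namespace WCAS

variable {ι O : Type*}

/-- The domain of a partial realization `ψ : ι → Option O`. -/
def dom (ψ : ι → Option O) : Set ι := {e | ψ e ≠ none}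

/-- A (full) realization `φ` is consistent with a partial realization `ψ`. -/
def consistent (φ : ι → O) (ψ : ι → Option O) : Prop :=
  ∀ e o, ψ e = some o → φ e = o

/-- `ψ` is a subrealization of `ψ'` (written `ψ ⊆ ψ'`). -/
def subreal (ψ ψ' : ι → Option O) : Prop :=
  ∀ e o, ψ e = some o → ψ' e = some o

/-- Extend a partial realization `ψ` by observing state `o` for item `e`. -/
def extendPR [DecidableEq ι] (ψ : ι → Option O) (e : ι) (o : O) : ι → Option O :=
  fun x => if x = e then some o else ψ x

/-- The empty partial realization. -/
def emptyPR : ι → Option O := fun _ => none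

/-- View a full realization as a partial realization with full domain. -/
def toPR (φ : ι → O) : ι → Option O := fun e => some (φ e)

/-- `O(e, ψ)`: the set of possible states of item `e` given observation `ψ`,
with respect to the set `U` of possible realizations. -/
def Ostates (U : Set (ι → O)) (e : ι) (ψ : ι → Option O) : Set O :=
  {o | ∃ φ ∈ U, consistent φ ψ ∧ φ e = o}

/-- The worst-case marginal utility `Δwc(e | ψ)` of item `e` on top of `ψ`. -/
noncomputable def Dwc [DecidableEq ι] (f : (ι → Option O) → ℝ) (U : Set (ι → O))
    (e : ι) (ψ : ι → Option O) : ℝ :=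
  sInf ((fun o => f (extendPR ψ e o) - f ψ) '' Ostates U e ψ)

/-- `f` is worst-case monotone. -/
def WCMonotone [DecidableEq ι] (f : (ι → Option O) → ℝ) (U : Set (ι → O)) : Prop :=
  ∀ ψ : ι → Option O, (∃ φ ∈ U, consistent φ ψ) →
    ∀ e, e ∉ dom ψ → 0 ≤ Dwc f U e ψ

/-- `f` is worst-case submodular. -/
def WCSubmodular [DecidableEq ι] (f : (ι → Option O) → ℝ) (U : Set (ι → O)) : Prop :=
  ∀ ψ ψ' : ι → Option O, subreal ψ ψ' → (∃ φ ∈ U, consistent φ ψ') →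
    ∀ e, e ∉ dom ψ' → Dwc f U e ψ' ≤ Dwc f U e ψ

/-- An adaptive policy maps each observation either to an item outside its
domain or to `none` (stop). -/
def ValidPolicy (π : (ι → Option O) → Option ι) : Prop :=
  ∀ ψ e, π ψ = some e → ψ e = none

/-- One step of executing policy `π` under realization `φ`. -/
def stepPolicy [DecidableEq ι] (π : (ι → Option O) → Option ι) (φ : ι → O)
    (ψ : ι → Option O) : ι → Option O :=
  match π ψ with
  | none => ψ
  | some e => extendPR ψ e (φ e)

/-- Executing policy `π` under realization `φ` for `n` steps, starting from the
empty observation. -/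
def runPolicy [DecidableEq ι] (π : (ι → Option O) → Option ι) (φ : ι → O) :
    ℕ → ι → Option O
  | 0 => emptyPR
  | n + 1 => stepPolicy π φ (runPolicy π φ n)

/-- The final partial realization `ψ(π, φ)` produced by executing `π` under `φ`
(a valid policy over a finite ground set terminates within `card ι` steps). -/
def finalPR [DecidableEq ι] [Fintype ι] (π : (ι → Option O) → Option ι) (φ : ι → O) :
    ι → Option O :=
  runPolicy π φ (Fintype.card ι)

open scoped Classical in
/-- The total cost `c(dom ψ)` of the items in the domain of `ψ`. -/
noncomputable def costPR [Fintype ι] (c : ι → ℝ) (ψ : ι → Option O) : ℝ :=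
  ∑ e : ι, if (ψ e).isSome then c e else 0

/-- The worst-case cost `c_wc(π) = max_{φ ∈ U} c(dom ψ(π, φ))`. -/
noncomputable def cwc [DecidableEq ι] [Fintype ι] (c : ι → ℝ) (U : Set (ι → O))
    (π : (ι → Option O) → Option ι) : ℝ :=
  sSup ((fun φ => costPR c (finalPR π φ)) '' U)

/-- The worst-case utility `f_wc(π) = min_{φ ∈ U} f(ψ(π, φ))`. -/
noncomputable def fwc [DecidableEq ι] [Fintype ι] (f : (ι → Option O) → ℝ)
    (U : Set (ι → O)) (π : (ι → Option O) → Option ι) : ℝ :=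
  sInf ((fun φ => f (finalPR π φ)) '' U)

/-- `ψ` is reachable by executing `π` under some realization in `U`. -/
def Reachable [DecidableEq ι] (π : (ι → Option O) → Option ι) (U : Set (ι → O))
    (ψ : ι → Option O) : Prop :=
  ∃ φ ∈ U, ∃ n, runPolicy π φ n = ψ

/-- Policy `π` covers the goal value `Q`: under every realization in `U`,
its final observation has utility at least `Q`. -/
def Covers [DecidableEq ι] [Fintype ι] (f : (ι → Option O) → ℝ) (U : Set (ι → O))
    (π : (ι → Option O) → Option ι) (Q : ℝ) : Prop :=
  ∀ φ ∈ U, Q ≤ f (finalPR π φ)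

/-- The worst-case density-greedy policy for the cover problem with goal `Q`:
it stops at observations with `f ψ ≥ Q`, and at any reachable observation with
`f ψ < Q` it selects an item maximizing `Δwc(e | ψ) / c(e)`. -/
def CoverGreedy [DecidableEq ι] [Fintype ι] (f : (ι → Option O) → ℝ)
    (U : Set (ι → O)) (c : ι → ℝ) (Q : ℝ) (π : (ι → Option O) → Option ι) : Prop :=
  ValidPolicy π ∧
  (∀ ψ : ι → Option O, Q ≤ f ψ → π ψ = none) ∧
  (∀ ψ : ι → Option O, Reachable π U ψ → f ψ < Q →
    ∃ e, e ∉ dom ψ ∧ π ψ = some e ∧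
      ∀ e', e' ∉ dom ψ → Dwc f U e' ψ / c e' ≤ Dwc f U e ψ / c e)

/-- The budgeted worst-case density-greedy policy: at any reachable observation
it picks a density-maximizing item and selects it if the budget permits,
stopping otherwise. -/
def BudgetGreedy [DecidableEq ι] [Fintype ι] (f : (ι → Option O) → ℝ)
    (U : Set (ι → O)) (c : ι → ℝ) (B : ℝ) (π : (ι → Option O) → Option ι) : Prop :=
  ValidPolicy π ∧
  ∀ ψ : ι → Option O, Reachable π U ψ → dom ψ ≠ Set.univ →
    ∃ e, e ∉ dom ψ ∧
      (∀ e', e' ∉ dom ψ → Dwc f U e' ψ / c e' ≤ Dwc f U e ψ / c e) ∧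
      ((costPR c ψ + c e ≤ B ∧ π ψ = some e) ∨ (B < costPR c ψ + c e ∧ π ψ = none))

/-- The relaxed budgeted worst-case density-greedy policy: it keeps selecting
density-maximizing items while the cost spent so far is within the budget
(thus also selecting the first item that makes the total cost exceed the
budget), and stops once the budget has been exceeded. -/
def RelaxedBudgetGreedy [DecidableEq ι] [Fintype ι] (f : (ι → Option O) → ℝ)
    (U : Set (ι → O)) (c : ι → ℝ) (B : ℝ) (π : (ι → Option O) → Option ι) : Prop :=
  ValidPolicy π ∧
  (∀ ψ : ι → Option O, Reachable π U ψ → B < costPR c ψ → π ψ = none) ∧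
  (∀ ψ : ι → Option O, Reachable π U ψ → costPR c ψ ≤ B → dom ψ ≠ Set.univ →
    ∃ e, e ∉ dom ψ ∧ π ψ = some e ∧
      ∀ e', e' ∉ dom ψ → Dwc f U e' ψ / c e' ≤ Dwc f U e ψ / c e)


section Aux

open scoped Classical

variable {ι O : Type*} [Fintype ι] [DecidableEq ι] [Fintype O]
variable {U : Set (ι → O)} {f : (ι → Option O) → ℝ}

lemma not_mem_dom {ψ : ι → Option O} {e : ι} : e ∉ dom ψ ↔ ψ e = none := by
  simp [dom]

lemma consistent_of_subreal {φ : ι → O} {ψ ψ' : ι → Option O}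
    (h : subreal ψ ψ') (hc : consistent φ ψ') : consistent φ ψ :=
  fun e o he => hc e o (h e o he)

lemma consistent_empty (φ : ι → O) : consistent φ (emptyPR : ι → Option O) := by
  intro e o h; simp [emptyPR] at h

lemma not_mem_dom_empty (e : ι) : e ∉ dom (emptyPR : ι → Option O) := by
  simp [dom, emptyPR]

lemma subreal_empty (ψ : ι → Option O) : subreal (emptyPR : ι → Option O) ψ := by
  intro e o h; simp [emptyPR] at h

lemma extendPR_self (ψ : ι → Option O) (e : ι) (o : O) : extendPR ψ e o e = some o := by
  simp [extendPR]

lemma extendPR_ne {ψ : ι → Option O} {e x : ι} (h : x ≠ e) (o : O) :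
    extendPR ψ e o x = ψ x := by
  simp [extendPR, h]

lemma subreal_extend {ψ : ι → Option O} {e : ι} (he : ψ e = none) (o : O) :
    subreal ψ (extendPR ψ e o) := by
  intro x ox hx
  by_cases hxe : x = e
  · subst hxe; rw [he] at hx; cases hx
  · rw [extendPR_ne hxe]; exact hx

lemma consistent_extend {φ : ι → O} {ψ : ι → Option O} {e : ι} {o : O}
    (h : consistent φ ψ) (ho : φ e = o) : consistent φ (extendPR ψ e o) := by
  intro x ox hx
  by_cases hxe : x = e
  · subst hxe; rw [extendPR_self] at hx; rw [← Option.some.inj hx]; exact ho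
  · rw [extendPR_ne hxe] at hx; exact h x ox hx

lemma Ostates_nonempty {ψ : ι → Option O} {e : ι}
    (h : ∃ φ ∈ U, consistent φ ψ) : (Ostates U e ψ).Nonempty := by
  obtain ⟨φ, hφ, hc⟩ := h
  exact ⟨φ e, φ, hφ, hc, rfl⟩

lemma Dwc_le {ψ : ι → Option O} {e : ι} {o : O} (ho : o ∈ Ostates U e ψ) :
    Dwc f U e ψ ≤ f (extendPR ψ e o) - f ψ :=
  csInf_le ((Set.toFinite _).image _).bddBelow ⟨o, ho, rfl⟩

lemma Dwc_attained {ψ : ι → Option O} {e : ι}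
    (h : (Ostates U e ψ).Nonempty) :
    ∃ o ∈ Ostates U e ψ, f (extendPR ψ e o) - f ψ = Dwc f U e ψ := by
  have hmem : Dwc f U e ψ ∈ (fun o => f (extendPR ψ e o) - f ψ) '' Ostates U e ψ :=
    (h.image _).csInf_mem ((Set.toFinite _).image _)
  obtain ⟨o, ho, heq⟩ := hmem
  exact ⟨o, ho, heq⟩

lemma f_mono_chain (hmono : WCMonotone f U) :
    ∀ (n : ℕ) (ψ ψ' : ι → Option O) (φ : ι → O), φ ∈ U → consistent φ ψ' → subreal ψ ψ' →
      (Finset.univ.filter fun x => ψ x = none ∧ (ψ' x).isSome).card = n → f ψ ≤ f ψ' := by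
  intro n
  induction n with
  | zero =>
    intro ψ ψ' φ hφU hcons hsub hn
    have hψ : ψ = ψ' := by
      funext x
      cases hx : ψ x with
      | some o => exact (hsub x o hx).symm
      | none =>
        cases hx' : ψ' x with
        | none => rfl
        | some o =>
          exfalso
          have hxmem : x ∈ Finset.univ.filter fun x => ψ x = none ∧ (ψ' x).isSome := by
            simp [hx, hx']
          rw [Finset.card_eq_zero] at hn
          rw [hn] at hxmem
          exact absurd hxmem (Finset.notMem_empty x)
    rw [hψ]
  | succ n ih =>
    intro ψ ψ' φ hφU hcons hsub hn
    have hne : (Finset.univ.filter fun x => ψ x = none ∧ (ψ' x).isSome).Nonempty := by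
      rw [← Finset.card_pos, hn]; omega
    obtain ⟨e, he⟩ := hne
    simp only [Finset.mem_filter, Finset.mem_univ, true_and] at he
    obtain ⟨he1, he2⟩ := he
    obtain ⟨o, ho⟩ := Option.isSome_iff_exists.mp he2
    have hφe : φ e = o := hcons e o ho
    have hsub1 : subreal (extendPR ψ e o) ψ' := by
      intro x ox hx
      by_cases hxe : x = e
      · subst hxe; rw [extendPR_self] at hx; rw [← Option.some.inj hx]; exact ho
      · rw [extendPR_ne hxe] at hx; exact hsub x ox hx
    have hcψ : consistent φ ψ := consistent_of_subreal hsub hcons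
    have hOmem : o ∈ Ostates U e ψ := ⟨φ, hφU, hcψ, hφe⟩
    have hD0 : 0 ≤ Dwc f U e ψ := hmono ψ ⟨φ, hφU, hcψ⟩ e (not_mem_dom.mpr he1)
    have hstep : f ψ ≤ f (extendPR ψ e o) := by
      have := Dwc_le (f := f) hOmem
      linarith
    have hcard :
        (Finset.univ.filter fun x => extendPR ψ e o x = none ∧ (ψ' x).isSome).card = n := by
      have hset : (Finset.univ.filter fun x => extendPR ψ e o x = none ∧ (ψ' x).isSome)
          = (Finset.univ.filter fun x => ψ x = none ∧ (ψ' x).isSome).erase e := by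
        ext x
        by_cases hxe : x = e
        · subst hxe; simp only [Finset.mem_filter, Finset.mem_erase, Finset.mem_insert, Finset.mem_univ, true_and]; simp [extendPR]
        · simp only [Finset.mem_filter, Finset.mem_erase, Finset.mem_insert, Finset.mem_univ, true_and]; simp [extendPR, hxe, Finset.mem_erase]
      rw [hset, Finset.card_erase_of_mem (by simp [he1, he2]), hn]
      omega
    exact le_trans hstep (ih (extendPR ψ e o) ψ' φ hφU hcons hsub1 hcard)

lemma f_le_of_subreal (hmono : WCMonotone f U) {φ : ι → O} {ψ ψ' : ι → Option O}
    (hφU : φ ∈ U) (hcons : consistent φ ψ') (hsub : subreal ψ ψ') : f ψ ≤ f ψ' :=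
  f_mono_chain hmono _ ψ ψ' φ hφU hcons hsub rfl

lemma costPR_empty (c : ι → ℝ) : costPR c (emptyPR : ι → Option O) = 0 := by
  simp [costPR, emptyPR]

lemma costPR_extend (c : ι → ℝ) {ψ : ι → Option O} {e : ι} (he : ψ e = none) (o : O) :
    costPR c (extendPR ψ e o) = costPR c ψ + c e := by
  classical
  unfold costPR
  have h : ∀ x ∈ Finset.univ, (if ((extendPR ψ e o) x).isSome then c x else 0)
      = (if (ψ x).isSome then c x else 0) + (if x = e then c x else 0) := by
    intro x _
    by_cases hxe : x = e
    · subst hxe; simp [extendPR, he]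
    · simp [extendPR, hxe]
  rw [Finset.sum_congr rfl h, Finset.sum_add_distrib]
  congr 1
  simp

lemma runPolicy_consistent (π : (ι → Option O) → Option ι) (φ : ι → O) (n : ℕ) :
    consistent φ (runPolicy π φ n) := by
  induction n with
  | zero => exact consistent_empty φ
  | succ n ih =>
    show consistent φ (stepPolicy π φ (runPolicy π φ n))
    unfold stepPolicy
    cases h : π (runPolicy π φ n) with
    | none => exact ih
    | some e => exact consistent_extend ih rfl

lemma runPolicy_subreal_succ {π : (ι → Option O) → Option ι} (hv : ValidPolicy π)
    (φ : ι → O) (n : ℕ) :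
    subreal (runPolicy π φ n) (runPolicy π φ (n+1)) := by
  show subreal _ (stepPolicy π φ (runPolicy π φ n))
  unfold stepPolicy
  cases h : π (runPolicy π φ n) with
  | none => exact fun x o hx => hx
  | some e => exact subreal_extend (hv _ e h) (φ e)

lemma runPolicy_subreal {π : (ι → Option O) → Option ι} (hv : ValidPolicy π)
    (φ : ι → O) {m n : ℕ} (h : m ≤ n) :
    subreal (runPolicy π φ m) (runPolicy π φ n) := by
  induction n with
  | zero =>
    have hm : m = 0 := Nat.le_zero.mp h
    subst hm; exact fun x o hx => hx
  | succ n ih =>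
    rcases Nat.lt_or_ge m (n+1) with h1 | h2
    · have hmn : m ≤ n := Nat.lt_succ_iff.mp h1
      exact fun x o hx => runPolicy_subreal_succ hv φ n x o (ih hmn x o hx)
    · have hm : m = n + 1 := le_antisymm h h2
      subst hm; exact fun x o hx => hx

lemma run_agree {π : (ι → Option O) → Option ι} (hv : ValidPolicy π) {φ φ' : ι → O} {n : ℕ}
    (h : consistent φ' (runPolicy π φ n)) :
    ∀ k, k ≤ n → runPolicy π φ' k = runPolicy π φ k := by
  intro k
  induction k with
  | zero => intro _; rfl
  | succ k ih =>
    intro hk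
    have hkn : k ≤ n := Nat.le_of_succ_le hk
    have heq := ih hkn
    show stepPolicy π φ' (runPolicy π φ' k) = stepPolicy π φ (runPolicy π φ k)
    rw [heq]
    unfold stepPolicy
    cases hπ : π (runPolicy π φ k) with
    | none => rfl
    | some e =>
      have hφ'e : φ' e = φ e := by
        have h1 : runPolicy π φ (k+1) e = some (φ e) := by
          show stepPolicy π φ (runPolicy π φ k) e = _
          unfold stepPolicy
          rw [hπ]; exact extendPR_self _ _ _
        have h2 : runPolicy π φ n e = some (φ e) :=
          runPolicy_subreal hv φ hk e (φ e) h1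
        exact h e (φ e) h2
      show extendPR (runPolicy π φ k) e (φ' e) = extendPR (runPolicy π φ k) e (φ e)
      rw [hφ'e]

lemma filter_extend {ψ : ι → Option O} {e : ι} (he : ψ e = none) (o : O) :
    (Finset.univ.filter fun x => ((extendPR ψ e o) x).isSome)
      = insert e (Finset.univ.filter fun x => (ψ x).isSome) := by
  ext x
  by_cases hxe : x = e
  · subst hxe; simp only [Finset.mem_filter, Finset.mem_erase, Finset.mem_insert, Finset.mem_univ, true_and]; simp [extendPR]
  · simp only [Finset.mem_filter, Finset.mem_erase, Finset.mem_insert, Finset.mem_univ, true_and]; simp [extendPR, hxe]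

lemma final_stop {π : (ι → Option O) → Option ι} (hv : ValidPolicy π) (φ : ι → O) :
    π (finalPR π φ) = none := by
  classical
  have key : ∀ n, π (runPolicy π φ n) = none ∨
      n ≤ (Finset.univ.filter fun x => ((runPolicy π φ n) x).isSome).card := by
    intro n
    induction n with
    | zero => right; exact Nat.zero_le _
    | succ n ih =>
      cases hπ : π (runPolicy π φ n) with
      | none =>
        left
        show π (stepPolicy π φ (runPolicy π φ n)) = none
        unfold stepPolicy; rw [hπ]; exact hπ
      | some e =>
        right
        have hcard : n ≤ (Finset.univ.filter fun x => ((runPolicy π φ n) x).isSome).card := by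
          rcases ih with h | h
          · rw [h] at hπ; cases hπ
          · exact h
        have he : runPolicy π φ n e = none := hv _ e hπ
        have hstep : stepPolicy π φ (runPolicy π φ n) = extendPR (runPolicy π φ n) e (φ e) := by
          unfold stepPolicy; rw [hπ]
        show _ ≤ (Finset.univ.filter fun x =>
            ((stepPolicy π φ (runPolicy π φ n)) x).isSome).card
        rw [hstep, filter_extend he, Finset.card_insert_of_notMem (by simp [he])]
        omega
  rcases key (Fintype.card ι) with h | h
  · exact h
  · have hcard : (Finset.univ.filter fun x =>
        ((runPolicy π φ (Fintype.card ι)) x).isSome).card = Fintype.card ι :=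
      le_antisymm (le_trans (Finset.card_filter_le _ _) (by simp)) h
    have huniv : (Finset.univ.filter fun x =>
        ((runPolicy π φ (Fintype.card ι)) x).isSome) = Finset.univ :=
      Finset.eq_univ_of_card _ hcard
    cases hfin : π (finalPR π φ) with
    | none => rfl
    | some e =>
      exfalso
      have h1 : finalPR π φ e = none := hv _ e hfin
      have h2 : e ∈ Finset.univ.filter fun x =>
          ((runPolicy π φ (Fintype.card ι)) x).isSome := by
        rw [huniv]; exact Finset.mem_univ e
      simp only [Finset.mem_filter, Finset.mem_univ, true_and] at h2
      have h3 : runPolicy π φ (Fintype.card ι) e = none := h1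
      rw [h3] at h2
      simp at h2

/-- Merge two partial realizations, with priority to the first. -/
def mergePR (ψ σ : ι → Option O) : ι → Option O :=
  fun x => match ψ x with
  | some o => some o
  | none => σ x

lemma mergePR_of_some {ψ σ : ι → Option O} {x : ι} {o : O} (h : ψ x = some o) :
    mergePR ψ σ x = some o := by unfold mergePR; rw [h]

lemma mergePR_of_none {ψ σ : ι → Option O} {x : ι} (h : ψ x = none) :
    mergePR ψ σ x = σ x := by unfold mergePR; rw [h]

lemma subreal_merge_left {ψ σ : ι → Option O} : subreal ψ (mergePR ψ σ) :=
  fun _ _ h => mergePR_of_some h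

lemma subreal_merge_right {φ : ι → O} {ψ σ : ι → Option O}
    (h1 : consistent φ ψ) (h2 : consistent φ σ) : subreal σ (mergePR ψ σ) := by
  intro x o hx
  cases hψ : ψ x with
  | none => rw [mergePR_of_none hψ]; exact hx
  | some o' =>
    rw [mergePR_of_some hψ]
    have : o' = o := by rw [← h1 x o' hψ, h2 x o hx]
    rw [this]

lemma consistent_merge {φ : ι → O} {ψ σ : ι → Option O}
    (h1 : consistent φ ψ) (h2 : consistent φ σ) : consistent φ (mergePR ψ σ) := by
  intro x o hx
  cases hψ : ψ x with
  | none => rw [mergePR_of_none hψ] at hx; exact h2 x o hx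
  | some o' =>
    rw [mergePR_of_some hψ] at hx
    have hoo : o' = o := Option.some.inj hx
    rw [← hoo]
    exact h1 x o' hψ

/-- The key lemma: if every available item has marginal density at most `d`
at observation `ψ0`, then no budget-`B` policy can gain more than `d * B`
beyond `f ψ0`. -/
lemma key_lemma {πs : (ι → Option O) → Option ι} (hπs : ValidPolicy πs)
    (hmono : WCMonotone f U) (hsub : WCSubmodular f U)
    {c : ι → ℝ} (hc : ∀ e, 0 ≤ c e) {B : ℝ}
    (hπsB : cwc c U πs ≤ B)
    {ψ0 : ι → Option O} (hcons : ∃ φ ∈ U, consistent φ ψ0)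
    {d : ℝ} (hd0 : 0 ≤ d) (hd : ∀ e, e ∉ dom ψ0 → Dwc f U e ψ0 ≤ c e * d) :
    fwc f U πs ≤ f ψ0 + d * B := by
  have main : ∀ n : ℕ, ∃ φ ∈ U, consistent φ ψ0 ∧
      f (mergePR ψ0 (runPolicy πs φ n)) ≤ f ψ0 + d * costPR c (runPolicy πs φ n) := by
    intro n
    induction n with
    | zero =>
      obtain ⟨φ, hφU, hφc⟩ := hcons
      refine ⟨φ, hφU, hφc, ?_⟩
      have h1 : mergePR ψ0 (runPolicy πs φ 0) = ψ0 := by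
        funext x
        cases hx : ψ0 x with
        | some o => exact mergePR_of_some hx
        | none => rw [mergePR_of_none hx]; rfl
      rw [h1]
      show f ψ0 ≤ f ψ0 + d * costPR c (emptyPR : ι → Option O)
      rw [costPR_empty]
      linarith
    | succ n ih =>
      obtain ⟨φ, hφU, hφc, hbound⟩ := ih
      set σ := runPolicy πs φ n with hσdef
      have hσc : consistent φ σ := runPolicy_consistent πs φ n
      have hmc : consistent φ (mergePR ψ0 σ) := consistent_merge hφc hσc
      cases hπ : πs σ with
      | none =>
        refine ⟨φ, hφU, hφc, ?_⟩
        have hrun : runPolicy πs φ (n+1) = σ := by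
          show stepPolicy πs φ (runPolicy πs φ n) = σ
          rw [← hσdef]
          unfold stepPolicy; rw [hπ]
        rw [hrun]; exact hbound
      | some e =>
        have heσ : σ e = none := hπs σ e hπ
        cases hψ0e : ψ0 e with
        | some o0 =>
          refine ⟨φ, hφU, hφc, ?_⟩
          have hrun : runPolicy πs φ (n+1) = extendPR σ e (φ e) := by
            show stepPolicy πs φ (runPolicy πs φ n) = _
            rw [← hσdef]
            unfold stepPolicy; rw [hπ]
          have hmerge : mergePR ψ0 (extendPR σ e (φ e)) = mergePR ψ0 σ := by
            funext x
            by_cases hxe : x = e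
            · subst hxe
              rw [mergePR_of_some hψ0e, mergePR_of_some hψ0e]
            · cases hx : ψ0 x with
              | some o => rw [mergePR_of_some hx, mergePR_of_some hx]
              | none =>
                rw [mergePR_of_none hx, mergePR_of_none hx, extendPR_ne hxe]
          rw [hrun, hmerge, costPR_extend c heσ]
          have h2 : 0 ≤ d * c e := mul_nonneg hd0 (hc e)
          have h3 : d * (costPR c σ + c e) = d * costPR c σ + d * c e := by ring
          linarith
        | none =>
          set m := mergePR ψ0 σ with hm
          have hme : m e = none := by rw [hm, mergePR_of_none hψ0e]; exact heσ
          have hmcons : ∃ φ' ∈ U, consistent φ' m := ⟨φ, hφU, hmc⟩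
          obtain ⟨o, ho, hattain⟩ := Dwc_attained (f := f) (Ostates_nonempty hmcons)
          obtain ⟨φ', hφ'U, hφ'm, hφ'e⟩ := ho
          have hsubψ0m : subreal ψ0 m := subreal_merge_left
          have hsubσm : subreal σ m := subreal_merge_right hφc hσc
          have hφ'σ : consistent φ' σ := consistent_of_subreal hsubσm hφ'm
          have hφ'ψ0 : consistent φ' ψ0 := consistent_of_subreal hsubψ0m hφ'm
          have hagree : runPolicy πs φ' n = σ := by
            rw [hσdef]
            exact run_agree hπs (hσdef ▸ hφ'σ) n le_rfl
          have hrun : runPolicy πs φ' (n+1) = extendPR σ e o := by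
            show stepPolicy πs φ' (runPolicy πs φ' n) = _
            rw [hagree]
            unfold stepPolicy; rw [hπ]
            show extendPR σ e (φ' e) = extendPR σ e o
            rw [hφ'e]
          have hmerge : mergePR ψ0 (extendPR σ e o) = extendPR m e o := by
            funext x
            by_cases hxe : x = e
            · subst hxe
              rw [mergePR_of_none hψ0e, extendPR_self, extendPR_self]
            · have h1 : extendPR σ e o x = σ x := extendPR_ne hxe o
              have h2 : extendPR m e o x = m x := extendPR_ne hxe o
              rw [h2, hm]
              cases hx : ψ0 x with
              | some o' => rw [mergePR_of_some hx, mergePR_of_some hx]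
              | none => rw [mergePR_of_none hx, mergePR_of_none hx, h1]
          have hDm : f (extendPR m e o) - f m = Dwc f U e m := hattain
          have hsubmod : Dwc f U e m ≤ Dwc f U e ψ0 :=
            hsub ψ0 m hsubψ0m ⟨φ, hφU, hmc⟩ e (not_mem_dom.mpr hme)
          have hde : Dwc f U e ψ0 ≤ c e * d := hd e (not_mem_dom.mpr hψ0e)
          refine ⟨φ', hφ'U, hφ'ψ0, ?_⟩
          rw [hrun, hmerge, costPR_extend c heσ]
          have h3 : d * (costPR c σ + c e) = d * costPR c σ + c e * d := by ring
          linarith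
  obtain ⟨φ, hφU, hφc, hbound⟩ := main (Fintype.card ι)
  have hfin : runPolicy πs φ (Fintype.card ι) = finalPR πs φ := rfl
  rw [hfin] at hbound
  have hσc : consistent φ (finalPR πs φ) := runPolicy_consistent πs φ _
  have hmc : consistent φ (mergePR ψ0 (finalPR πs φ)) := consistent_merge hφc hσc
  have h1 : f (finalPR πs φ) ≤ f (mergePR ψ0 (finalPR πs φ)) :=
    f_le_of_subreal hmono hφU hmc (subreal_merge_right hφc hσc)
  have h2 : fwc f U πs ≤ f (finalPR πs φ) :=
    csInf_le ((Set.toFinite U).image _).bddBelow ⟨φ, hφU, rfl⟩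
  have h3 : costPR c (finalPR πs φ) ≤ B :=
    le_trans (le_csSup ((Set.toFinite U).image _).bddAbove ⟨φ, hφU, rfl⟩) hπsB
  have h4 : d * costPR c (finalPR πs φ) ≤ d * B := mul_le_mul_of_nonneg_left h3 hd0
  linarith

end Aux

/-- **Theorem 4 (main maximization result).** Suppose `f` is worst-case monotone
and worst-case submodular with `f ∅ = 0`, and let `B` be a positive integer
budget with `c e ≤ B` for every item `e`. Let `π^g` be the budgeted worst-case
density-greedy policy. Then for every adaptive policy `π*` with
`c_wc(π*) ≤ B`,
`max { f_wc(π^g), max_{e ∈ E} Δwc(e | ∅) } ≥ ((1 − 1/e)/2) · f_wc(π*)`. -/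
theorem stmt_14 {ι O : Type*} [Fintype ι] [Nonempty ι] [DecidableEq ι] [Fintype O]
    (U : Set (ι → O)) (hU : U.Nonempty)
    (c : ι → ℕ) (hc : ∀ e, 0 < c e)
    (f : (ι → Option O) → ℝ) (hf0 : ∀ ψ, 0 ≤ f ψ)
    (hmono : WCMonotone f U) (hsub : WCSubmodular f U)
    (hempty : f emptyPR = 0)
    (B : ℕ) (hB : 0 < B) (hcB : ∀ e, c e ≤ B)
    (πg : (ι → Option O) → Option ι)
    (hg : BudgetGreedy f U (fun e => (c e : ℝ)) (B : ℝ) πg)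
    (πs : (ι → Option O) → Option ι) (hπs : ValidPolicy πs)
    (hπsB : cwc (fun e => (c e : ℝ)) U πs ≤ (B : ℝ)) :
    ((1 - (Real.exp 1)⁻¹) / 2) * fwc f U πs ≤
      max (fwc f U πg)
        (sSup (Set.range fun e => Dwc f U e (emptyPR : ι → Option O))) := by
  classical
  set cR : ι → ℝ := fun e => (c e : ℝ) with hcRdef
  obtain ⟨hgv, hgs⟩ := hg
  set Q := fwc f U πs with hQ
  set M := sSup (Set.range fun e => Dwc f U e (emptyPR : ι → Option O)) with hM
  have hcR0 : ∀ e, (0:ℝ) < cR e := fun e => by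
    simp only [hcRdef]; exact_mod_cast hc e
  have hcRB : ∀ e, cR e ≤ (B:ℝ) := fun e => by
    simp only [hcRdef]; exact_mod_cast hcB e
  have hBpos : (0:ℝ) < B := by exact_mod_cast hB
  have hQ0 : 0 ≤ Q := Real.sInf_nonneg (by rintro x ⟨φ, hφ, rfl⟩; exact hf0 _)
  have hDwc_empty_nonneg : ∀ e : ι, 0 ≤ Dwc f U e (emptyPR : ι → Option O) := by
    intro e
    obtain ⟨φ0, hφ0⟩ := hU
    exact hmono emptyPR ⟨φ0, hφ0, consistent_empty φ0⟩ e (not_mem_dom_empty e)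
  have hDM : ∀ e, Dwc f U e (emptyPR : ι → Option O) ≤ M := fun e =>
    le_csSup (Set.finite_range _).bddAbove ⟨e, rfl⟩
  have hM0 : 0 ≤ M :=
    le_trans (hDwc_empty_nonneg (Classical.arbitrary ι)) (hDM _)
  have hexp0 : (0:ℝ) ≤ (Real.exp 1)⁻¹ := (inv_nonneg).mpr (Real.exp_pos 1).le
  have perphi : ∀ φ ∈ U, Q * (1 - (Real.exp 1)⁻¹) ≤ f (finalPR πg φ) + M := by
    intro φ hφ
    have Inv : ∀ n, Q - f (runPolicy πg φ n) ≤
        Q * Real.exp (-(costPR cR (runPolicy πg φ n)) / B) := by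
      intro n
      induction n with
      | zero =>
        show Q - f (emptyPR : ι → Option O) ≤
          Q * Real.exp (-(costPR cR (emptyPR : ι → Option O)) / B)
        rw [hempty, costPR_empty]
        simp
      | succ n ih =>
        set ψ := runPolicy πg φ n with hψdef
        cases hπ : πg ψ with
        | none =>
          have hrun : runPolicy πg φ (n+1) = ψ := by
            show stepPolicy πg φ (runPolicy πg φ n) = ψ
            rw [← hψdef]
            unfold stepPolicy; rw [hπ]
          rw [hrun]; exact ih
        | some e =>
          have heψ : ψ e = none := hgv ψ e hπ
          have hedom : e ∉ dom ψ := not_mem_dom.mpr heψ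
          have hdomne : dom ψ ≠ Set.univ := by
            intro hcontra
            exact hedom (hcontra ▸ Set.mem_univ e)
          have hreach : Reachable πg U ψ := ⟨φ, hφ, n, hψdef.symm⟩
          obtain ⟨e', he'dom, hmax, hbr⟩ := hgs ψ hreach hdomne
          rcases hbr with ⟨hcost, heq⟩ | ⟨_, heq⟩
          swap
          · rw [heq] at hπ; cases hπ
          have hee' : e' = e := by
            rw [heq] at hπ; exact Option.some.inj hπ
          subst hee'
          have hconsψ : consistent φ ψ := hψdef ▸ runPolicy_consistent πg φ n
          have hD0 : 0 ≤ Dwc f U e' ψ := hmono ψ ⟨φ, hφ, hconsψ⟩ e' hedom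
          have hd : ∀ x, x ∉ dom ψ → Dwc f U x ψ ≤ cR x * (Dwc f U e' ψ / cR e') := by
            intro x hx
            calc Dwc f U x ψ = (Dwc f U x ψ / cR x) * cR x :=
                  (div_mul_cancel₀ _ (hcR0 x).ne').symm
              _ ≤ (Dwc f U e' ψ / cR e') * cR x :=
                  mul_le_mul_of_nonneg_right (hmax x hx) (hcR0 x).le
              _ = cR x * (Dwc f U e' ψ / cR e') := by ring
          have hd0 : 0 ≤ Dwc f U e' ψ / cR e' := div_nonneg hD0 (hcR0 e').le
          have hkey : Q ≤ f ψ + (Dwc f U e' ψ / cR e') * B :=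
            key_lemma hπs hmono hsub (fun x => (hcR0 x).le) hπsB
              ⟨φ, hφ, hconsψ⟩ hd0 hd
          have hrun : runPolicy πg φ (n+1) = extendPR ψ e' (φ e') := by
            show stepPolicy πg φ (runPolicy πg φ n) = _
            rw [← hψdef]
            unfold stepPolicy; rw [hπ]
          have hmarg : Dwc f U e' ψ ≤ f (extendPR ψ e' (φ e')) - f ψ :=
            Dwc_le ⟨φ, hφ, hconsψ, rfl⟩
          rw [hrun, costPR_extend cR heψ]
          have h5 : (Q - f ψ) * cR e' ≤ Dwc f U e' ψ * B := by
            have h5a : Q - f ψ ≤ (Dwc f U e' ψ / cR e') * B := by linarith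
            have h5b := mul_le_mul_of_nonneg_right h5a (hcR0 e').le
            calc (Q - f ψ) * cR e' ≤ (Dwc f U e' ψ / cR e') * B * cR e' := h5b
              _ = Dwc f U e' ψ * B := by
                  rw [mul_right_comm, div_mul_cancel₀ _ (hcR0 e').ne']
          have h6 : (Q - f ψ) * cR e' / B ≤ Dwc f U e' ψ :=
            (div_le_iff₀ hBpos).mpr h5
          have hgoal2 : Q - f (extendPR ψ e' (φ e')) ≤ (Q - f ψ) * (1 - cR e' / B) := by
            have hexpand : (Q - f ψ) * (1 - cR e' / B)
                = (Q - f ψ) - (Q - f ψ) * cR e' / B := by ring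
            rw [hexpand]
            linarith
          have h1cb : 0 ≤ 1 - cR e' / B := by
            have := (div_le_one hBpos).mpr (hcRB e')
            linarith
          have hgoal3 : (Q - f ψ) * (1 - cR e' / B)
              ≤ (Q * Real.exp (-(costPR cR ψ) / B)) * (1 - cR e' / B) :=
            mul_le_mul_of_nonneg_right ih h1cb
          have hexple : 1 - cR e' / B ≤ Real.exp (-(cR e' / B)) := by
            have := Real.add_one_le_exp (-(cR e' / B))
            linarith
          have hQexp0 : 0 ≤ Q * Real.exp (-(costPR cR ψ) / B) :=
            mul_nonneg hQ0 (Real.exp_pos _).le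
          have hgoal4 : (Q * Real.exp (-(costPR cR ψ) / B)) * (1 - cR e' / B)
              ≤ (Q * Real.exp (-(costPR cR ψ) / B)) * Real.exp (-(cR e' / B)) :=
            mul_le_mul_of_nonneg_left hexple hQexp0
          have hgoal5 : (Q * Real.exp (-(costPR cR ψ) / B)) * Real.exp (-(cR e' / B))
              = Q * Real.exp (-(costPR cR ψ + cR e') / B) := by
            rw [mul_assoc, ← Real.exp_add]
            congr 1
            ring
          linarith
    have hstop : πg (finalPR πg φ) = none := final_stop hgv φ
    have hInvF : Q - f (finalPR πg φ) ≤
        Q * Real.exp (-(costPR cR (finalPR πg φ)) / B) := Inv (Fintype.card ι)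
    have hconsF : consistent φ (finalPR πg φ) := runPolicy_consistent πg φ _
    by_cases hdom : dom (finalPR πg φ) = Set.univ
    · have hkey : Q ≤ f (finalPR πg φ) + 0 * B :=
        key_lemma hπs hmono hsub (fun x => (hcR0 x).le) hπsB
          ⟨φ, hφ, hconsF⟩ le_rfl
          (fun x hx => absurd (hdom ▸ Set.mem_univ x) hx)
      nlinarith [mul_nonneg hQ0 hexp0]
    · obtain ⟨e, hedom, hmax, hbr⟩ := hgs (finalPR πg φ)
        ⟨φ, hφ, Fintype.card ι, rfl⟩ hdom
      rcases hbr with ⟨_, heq⟩ | ⟨hcost, _⟩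
      · rw [heq] at hstop; cases hstop
      have hD0 : 0 ≤ Dwc f U e (finalPR πg φ) :=
        hmono _ ⟨φ, hφ, hconsF⟩ e hedom
      have hd : ∀ x, x ∉ dom (finalPR πg φ) →
          Dwc f U x (finalPR πg φ) ≤ cR x * (Dwc f U e (finalPR πg φ) / cR e) := by
        intro x hx
        calc Dwc f U x (finalPR πg φ)
            = (Dwc f U x (finalPR πg φ) / cR x) * cR x :=
              (div_mul_cancel₀ _ (hcR0 x).ne').symm
          _ ≤ (Dwc f U e (finalPR πg φ) / cR e) * cR x :=
              mul_le_mul_of_nonneg_right (hmax x hx) (hcR0 x).le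
          _ = cR x * (Dwc f U e (finalPR πg φ) / cR e) := by ring
      have hd0 : 0 ≤ Dwc f U e (finalPR πg φ) / cR e := div_nonneg hD0 (hcR0 e).le
      have hkey : Q ≤ f (finalPR πg φ) + (Dwc f U e (finalPR πg φ) / cR e) * B :=
        key_lemma hπs hmono hsub (fun x => (hcR0 x).le) hπsB ⟨φ, hφ, hconsF⟩ hd0 hd
      have h5 : (Q - f (finalPR πg φ)) * cR e ≤ Dwc f U e (finalPR πg φ) * B := by
        have h5a : Q - f (finalPR πg φ)
            ≤ (Dwc f U e (finalPR πg φ) / cR e) * B := by linarith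
        have h5b := mul_le_mul_of_nonneg_right h5a (hcR0 e).le
        calc (Q - f (finalPR πg φ)) * cR e
            ≤ (Dwc f U e (finalPR πg φ) / cR e) * B * cR e := h5b
          _ = Dwc f U e (finalPR πg φ) * B := by
              rw [mul_right_comm, div_mul_cancel₀ _ (hcR0 e).ne']
      have h6 : (Q - f (finalPR πg φ)) * cR e / B ≤ Dwc f U e (finalPR πg φ) :=
        (div_le_iff₀ hBpos).mpr h5
      have h1cb : 0 ≤ 1 - cR e / B := by
        have := (div_le_one hBpos).mpr (hcRB e)
        linarith
      have hgoal2 : Q - f (finalPR πg φ) - Dwc f U e (finalPR πg φ)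
          ≤ (Q - f (finalPR πg φ)) * (1 - cR e / B) := by
        have hexpand : (Q - f (finalPR πg φ)) * (1 - cR e / B)
            = (Q - f (finalPR πg φ)) - (Q - f (finalPR πg φ)) * cR e / B := by ring
        rw [hexpand]
        linarith
      have hgoal3 : (Q - f (finalPR πg φ)) * (1 - cR e / B)
          ≤ (Q * Real.exp (-(costPR cR (finalPR πg φ)) / B)) * (1 - cR e / B) :=
        mul_le_mul_of_nonneg_right hInvF h1cb
      have hexple : 1 - cR e / B ≤ Real.exp (-(cR e / B)) := by
        have := Real.add_one_le_exp (-(cR e / B))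
        linarith
      have hQexp0 : 0 ≤ Q * Real.exp (-(costPR cR (finalPR πg φ)) / B) :=
        mul_nonneg hQ0 (Real.exp_pos _).le
      have hgoal4 : (Q * Real.exp (-(costPR cR (finalPR πg φ)) / B)) * (1 - cR e / B)
          ≤ (Q * Real.exp (-(costPR cR (finalPR πg φ)) / B)) * Real.exp (-(cR e / B)) :=
        mul_le_mul_of_nonneg_left hexple hQexp0
      have hgoal5 : (Q * Real.exp (-(costPR cR (finalPR πg φ)) / B)) * Real.exp (-(cR e / B))
          = Q * Real.exp (-(costPR cR (finalPR πg φ) + cR e) / B) := by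
        rw [mul_assoc, ← Real.exp_add]
        congr 1
        ring
      have hlast : Q * Real.exp (-(costPR cR (finalPR πg φ) + cR e) / B)
          ≤ Q * (Real.exp 1)⁻¹ := by
        rw [← Real.exp_neg]
        refine mul_le_mul_of_nonneg_left (Real.exp_le_exp.mpr ?_) hQ0
        have h7 : (1:ℝ) ≤ (costPR cR (finalPR πg φ) + cR e) / B :=
          (one_le_div hBpos).mpr hcost.le
        rw [neg_div]
        linarith
      have hDMe : Dwc f U e (finalPR πg φ) ≤ M := by
        refine le_trans ?_ (hDM e)
        exact hsub emptyPR (finalPR πg φ) (subreal_empty _) ⟨φ, hφ, hconsF⟩ e hedom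
      have hring : Q * (1 - (Real.exp 1)⁻¹) = Q - Q * (Real.exp 1)⁻¹ := by ring
      linarith
  have hG : Q * (1 - (Real.exp 1)⁻¹) - M ≤ fwc f U πg := by
    refine le_csInf (hU.image _) ?_
    rintro x ⟨φ, hφ, rfl⟩
    linarith [perphi φ hφ]
  have hmax1 := le_max_left (fwc f U πg) M
  have hmax2 := le_max_right (fwc f U πg) M
  linarith


end WCAS
end

section
/- Pointwise submodularity does not suffice for the density-greedy guarantee: for every real r > 0 there exist a finite item set E, positive item costs c, a finite state set O, a nonempty set U of realizations, a goal value Q > 0, and a utility function of the form f(ψ) = Σ_{e ∈ dom(ψ)} v(e, ψ(e)) for nonnegative values v (so f is modular, hence the set function S ↦ Σ_{e∈S} v(e, φ(e)) is submodular for every φ ∈ U, and f is worst-case monotone and minimal dependent), such that every partial realization ψ consistent with some φ ∈ U with f(ψ) > 0 satisfies f(ψ) ≥ Q (i.e., the gap parameter η equals Q), and there are a worst-case density-greedy policy π^g covering Q and an adaptive policy π* covering Q with c_wc(π^g) > r · c_wc(π*). -/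
namespace WCAS

variable {ι O : Type*}

/-! ### Auxiliary construction for `stmt_15` -/

noncomputable section Ex15

open Classical

/-- The two possible realizations. Items: `0 = d`, `1 = x₀`, `2 = x₁`, `3 = y`. -/
def phiex (j : Fin 2) : Fin 4 → Fin 2 := fun e =>
  if e = 0 then j
  else if e = 1 then (if j = 0 then 1 else 0)
  else if e = 2 then (if j = 1 then 1 else 0)
  else 0

def Uex : Set (Fin 4 → Fin 2) := {phiex 0, phiex 1}

def vex : Fin 4 → Fin 2 → ℝ := fun e o =>
  if e = 0 then 0 else if e = 3 then 1 else if o = 1 then 1 else 0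

def fex : (Fin 4 → Option (Fin 2)) → ℝ := fun ψ => ∑ e, (ψ e).elim 0 (vex e)

def psi1 : Fin 4 → Option (Fin 2) := extendPR emptyPR 3 0

/-- The greedy policy: pick `y` (item 3) and stop. -/
def pgex : (Fin 4 → Option (Fin 2)) → Option (Fin 4) := fun ψ =>
  if 1 ≤ fex ψ then none else if ψ 3 = none then some 3 else none

def tgt (o : Fin 2) : Fin 4 := if o = 0 then 1 else 2

/-- The smart policy: query `d` (item 0), then the indicated `x` item. -/
def psex : (Fin 4 → Option (Fin 2)) → Option (Fin 4) := fun ψ =>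
  match ψ 0 with
  | none => some 0
  | some o => if ψ (tgt o) = none then some (tgt o) else none

def psi2 (j : Fin 2) : Fin 4 → Option (Fin 2) :=
  extendPR (extendPR emptyPR 0 j) (tgt j) 1

lemma mem_Uex {φ : Fin 4 → Fin 2} (h : φ ∈ Uex) : φ = phiex 0 ∨ φ = phiex 1 := h

lemma fex_empty : fex (emptyPR : Fin 4 → Option (Fin 2)) = 0 := by
  simp [fex, emptyPR, Fin.sum_univ_four]

lemma fex_ext_empty (e : Fin 4) (o : Fin 2) :
    fex (extendPR emptyPR e o) = vex e o := by
  fin_cases e <;>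
    simp (config := { decide := true }) [fex, extendPR, emptyPR, Fin.sum_univ_four, vex]

lemma fex_psi1 : fex psi1 = 1 := by
  rw [psi1, fex_ext_empty]
  simp (config := { decide := true }) [vex]

lemma Ost_empty (e : Fin 4) :
    Ostates Uex e (emptyPR : Fin 4 → Option (Fin 2)) = {phiex 0 e, phiex 1 e} := by
  ext o
  constructor
  · rintro ⟨φ, hφ, -, rfl⟩
    rcases mem_Uex hφ with rfl | rfl
    · exact Or.inl rfl
    · exact Or.inr rfl
  · rintro (rfl | rfl)
    · exact ⟨phiex 0, Or.inl rfl, fun e o h => by simp [emptyPR] at h, rfl⟩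
    · exact ⟨phiex 1, Or.inr rfl, fun e o h => by simp [emptyPR] at h, rfl⟩

lemma Dwc_empty_3 : Dwc fex Uex 3 (emptyPR : Fin 4 → Option (Fin 2)) = 1 := by
  have him : ((fun o => fex (extendPR emptyPR 3 o) - fex emptyPR) ''
      Ostates Uex 3 (emptyPR : Fin 4 → Option (Fin 2))) = {1} := by
    rw [Ost_empty]
    have h0 : phiex 0 3 = (0 : Fin 2) := rfl
    have h1 : phiex 1 3 = (0 : Fin 2) := rfl
    rw [h0, h1, Set.pair_eq_singleton, Set.image_singleton, fex_empty, fex_ext_empty]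
    have : vex 3 0 = 1 := by simp (config := { decide := true }) [vex]
    rw [this]
    norm_num
  rw [Dwc, him, csInf_singleton]

lemma Dwc_empty_nonpos (e : Fin 4) (he : e ≠ 3) :
    Dwc fex Uex e (emptyPR : Fin 4 → Option (Fin 2)) ≤ 0 := by
  have hbdd : BddBelow ((fun o => fex (extendPR emptyPR e o) - fex emptyPR) ''
      Ostates Uex e (emptyPR : Fin 4 → Option (Fin 2))) :=
    (Set.toFinite _).image _ |>.bddBelow
  have key : ∃ o ∈ Ostates Uex e (emptyPR : Fin 4 → Option (Fin 2)),
      fex (extendPR emptyPR e o) - fex emptyPR = 0 := by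
    fin_cases e
    · refine ⟨0, ?_, ?_⟩
      · rw [Ost_empty]; exact Or.inl rfl
      · rw [fex_ext_empty, fex_empty]
        simp (config := { decide := true }) [vex]
    · refine ⟨0, ?_, ?_⟩
      · rw [Ost_empty]; exact Or.inr rfl
      · rw [fex_ext_empty, fex_empty]
        simp (config := { decide := true }) [vex]
    · refine ⟨0, ?_, ?_⟩
      · rw [Ost_empty]; exact Or.inl rfl
      · rw [fex_ext_empty, fex_empty]
        simp (config := { decide := true }) [vex]
    · exact absurd rfl he
  obtain ⟨o, ho, hzero⟩ := key
  calc Dwc fex Uex e emptyPR ≤ fex (extendPR emptyPR e o) - fex emptyPR :=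
        csInf_le hbdd ⟨o, ho, rfl⟩
    _ = 0 := hzero

lemma phi_three {φ : Fin 4 → Fin 2} (h : φ ∈ Uex) : φ 3 = 0 := by
  rcases mem_Uex h with rfl | rfl <;> rfl

lemma pgex_empty : pgex (emptyPR : Fin 4 → Option (Fin 2)) = some 3 := by
  rw [pgex]
  rw [if_neg (by rw [fex_empty]; norm_num)]
  rfl

lemma pgex_psi1 : pgex psi1 = none := by
  rw [pgex, if_pos (le_of_eq fex_psi1.symm)]

lemma step_pgex_empty {φ : Fin 4 → Fin 2} (h : φ ∈ Uex) :
    stepPolicy pgex φ emptyPR = psi1 := by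
  rw [stepPolicy, pgex_empty]
  show extendPR emptyPR 3 (φ 3) = psi1
  rw [phi_three h]
  rfl

lemma step_pgex_psi1 (φ : Fin 4 → Fin 2) : stepPolicy pgex φ psi1 = psi1 := by
  rw [stepPolicy, pgex_psi1]

lemma runPolicy_pgex_succ {φ : Fin 4 → Fin 2} (h : φ ∈ Uex) (n : ℕ) :
    runPolicy pgex φ (n + 1) = psi1 := by
  induction n with
  | zero => exact step_pgex_empty h
  | succ n ih =>
    show stepPolicy pgex φ (runPolicy pgex φ (n + 1)) = psi1
    rw [ih, step_pgex_psi1]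

lemma finalPR_pgex {φ : Fin 4 → Fin 2} (h : φ ∈ Uex) : finalPR pgex φ = psi1 := by
  rw [finalPR, Fintype.card_fin]
  exact runPolicy_pgex_succ h 3


def psA (j : Fin 2) : Fin 4 → Option (Fin 2) := extendPR emptyPR 0 j

lemma run_psex_1 (j : Fin 2) : runPolicy psex (phiex j) 1 = psA j := by
  fin_cases j <;> rfl

lemma run_psex_succ2 (j : Fin 2) (n : ℕ) :
    runPolicy psex (phiex j) (n + 2) = psi2 j := by
  induction n with
  | zero =>
    show stepPolicy psex (phiex j) (runPolicy psex (phiex j) 1) = psi2 j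
    rw [run_psex_1]
    fin_cases j <;> rfl
  | succ n ih =>
    show stepPolicy psex (phiex j) (runPolicy psex (phiex j) (n + 2)) = psi2 j
    rw [ih]
    clear ih
    fin_cases j <;> rfl

lemma finalPR_psex (j : Fin 2) : finalPR psex (phiex j) = psi2 j := by
  rw [finalPR, Fintype.card_fin]
  exact run_psex_succ2 j 2

lemma phi_form {φ : Fin 4 → Fin 2} (h : φ ∈ Uex) : ∃ j : Fin 2, φ = phiex j := by
  rcases mem_Uex h with rfl | rfl
  exacts [⟨0, rfl⟩, ⟨1, rfl⟩]

lemma fex_psi2 (j : Fin 2) : fex (psi2 j) = 1 := by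
  fin_cases j <;>
    · simp (config := { decide := true })
        [fex, psi2, extendPR, emptyPR, tgt, Fin.sum_univ_four, vex]

lemma reach_pgex {ψ : Fin 4 → Option (Fin 2)} (h : Reachable pgex Uex ψ) :
    ψ = emptyPR ∨ ψ = psi1 := by
  obtain ⟨φ, hφ, n, rfl⟩ := h
  cases n with
  | zero => exact Or.inl rfl
  | succ n => exact Or.inr (runPolicy_pgex_succ hφ n)

lemma costPR_psi1 (c : Fin 4 → ℝ) : costPR c psi1 = c 3 := by
  simp (config := { decide := true })
    [costPR, psi1, extendPR, emptyPR, Fin.sum_univ_four]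

lemma costPR_psi2 (c : Fin 4 → ℝ) (j : Fin 2) : costPR c (psi2 j) = c 0 + c (tgt j) := by
  fin_cases j <;>
    · simp (config := { decide := true })
        [costPR, psi2, extendPR, emptyPR, tgt, Fin.sum_univ_four]

lemma cwc_const (c : Fin 4 → ℝ) (π : (Fin 4 → Option (Fin 2)) → Option (Fin 4))
    (x : ℝ) (h : ∀ φ ∈ Uex, costPR c (finalPR π φ) = x) : cwc c Uex π = x := by
  rw [cwc]
  have him : (fun φ => costPR c (finalPR π φ)) '' Uex = {x} := by
    rw [Uex, Set.image_pair, h _ (Or.inl rfl), h _ (Or.inr rfl), Set.pair_eq_singleton]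
  rw [him, csSup_singleton]

lemma vex_nonneg (e : Fin 4) (o : Fin 2) : 0 ≤ vex e o := by
  unfold vex; split_ifs <;> norm_num

lemma valid_psex : ValidPolicy psex := by
  intro ψ e h
  revert h
  unfold psex
  cases hψ : ψ 0 with
  | none =>
    intro h
    cases h
    exact hψ
  | some o =>
    intro h
    have h' : (if ψ (tgt o) = none then some (tgt o) else none) = some e := h
    split_ifs at h' with ht
    cases h'
    exact ht

end Ex15

/-- **Pointwise submodularity is not sufficient.** For every `r > 0` there
exist a finite item set `Fin n`, positive costs `c`, a finite state set
`Fin nO`, a nonempty set `U` of realizations, a goal value `Q > 0`, and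
nonnegative values `v` defining the modular (hence pointwise submodular)
utility `f ψ = ∑_{e ∈ dom ψ} v e (ψ e)`, such that every partial realization
consistent with some realization in `U` with positive utility already has
utility at least `Q` (so the gap parameter `η` equals `Q`), yet there are a
worst-case density-greedy policy `π^g` covering `Q` and an adaptive policy
`π*` covering `Q` with `c_wc(π^g) > r · c_wc(π*)`. -/
theorem stmt_15 :
    ∀ r : ℝ, 0 < r →
      ∃ (n nO : ℕ), 0 < n ∧ 0 < nO ∧
      ∃ (c : Fin n → ℝ), (∀ e, 0 < c e) ∧
      ∃ (U : Set (Fin n → Fin nO)), U.Nonempty ∧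
      ∃ (Q : ℝ), 0 < Q ∧
      ∃ (v : Fin n → Fin nO → ℝ), (∀ e o, 0 ≤ v e o) ∧
      (∀ ψ : Fin n → Option (Fin nO), (∃ φ ∈ U, consistent φ ψ) →
        0 < (∑ e, (ψ e).elim 0 (v e)) → Q ≤ ∑ e, (ψ e).elim 0 (v e)) ∧
      ∃ πg : (Fin n → Option (Fin nO)) → Option (Fin n),
        CoverGreedy (fun ψ => ∑ e, (ψ e).elim 0 (v e)) U c Q πg ∧
        Covers (fun ψ => ∑ e, (ψ e).elim 0 (v e)) U πg Q ∧
      ∃ πs : (Fin n → Option (Fin nO)) → Option (Fin n),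
        ValidPolicy πs ∧
        Covers (fun ψ => ∑ e, (ψ e).elim 0 (v e)) U πs Q ∧
        r * cwc c U πs < cwc c U πg := by
  intro r hr
  set c : Fin 4 → ℝ := fun e => if e = 3 then 2 * r + 1 else 1 with hc
  have hc3 : c 3 = 2 * r + 1 := by simp [hc]
  have hcpos : ∀ e, 0 < c e := by
    intro e; simp only [hc]; split_ifs <;> linarith
  refine ⟨4, 2, by norm_num, by norm_num, c, hcpos, Uex, ⟨phiex 0, Or.inl rfl⟩,
    1, one_pos, vex, fun e o => vex_nonneg e o, ?_, pgex, ?_, ?_, psex,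
    valid_psex, ?_, ?_⟩
  · -- gap condition
    intro ψ _ hpos
    have hterm : ∀ e, (ψ e).elim 0 (vex e) = 0 ∨ (ψ e).elim 0 (vex e) = 1 := by
      intro e
      cases hψ : ψ e with
      | none => exact Or.inl rfl
      | some o =>
        show vex e o = 0 ∨ vex e o = 1
        unfold vex; split_ifs <;> simp
    have hnn : ∀ e : Fin 4, e ∈ Finset.univ → 0 ≤ (ψ e).elim 0 (vex e) := by
      intro e _
      cases hψ : ψ e with
      | none => exact le_refl 0
      | some o => exact vex_nonneg e o
    by_cases hall : ∀ e, (ψ e).elim 0 (vex e) = 0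
    · rw [Finset.sum_eq_zero (fun e _ => hall e)] at hpos
      exact absurd hpos (lt_irrefl 0)
    · push_neg at hall
      obtain ⟨e, he⟩ := hall
      have h1 : (ψ e).elim 0 (vex e) = 1 := (hterm e).resolve_left he
      calc (1 : ℝ) = (ψ e).elim 0 (vex e) := h1.symm
        _ ≤ ∑ e, (ψ e).elim 0 (vex e) :=
            Finset.single_le_sum hnn (Finset.mem_univ e)
  · -- CoverGreedy
    refine ⟨?_, ?_, ?_⟩
    · intro ψ e h
      unfold pgex at h
      split_ifs at h with h1 h2
      cases h
      exact h2
    · intro ψ hQ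
      show (if 1 ≤ fex ψ then none else if ψ 3 = none then some 3 else none) = none
      exact if_pos (show (1 : ℝ) ≤ fex ψ from hQ)
    · intro ψ hreach hlt
      have hlt' : fex ψ < 1 := hlt
      rcases reach_pgex hreach with rfl | rfl
      · refine ⟨3, by simp [dom, emptyPR], pgex_empty, ?_⟩
        intro e' _
        show Dwc fex Uex e' emptyPR / c e' ≤ Dwc fex Uex 3 emptyPR / c 3
        by_cases he' : e' = 3
        · subst he'; exact le_refl _
        · have hL : Dwc fex Uex e' emptyPR / c e' ≤ 0 :=
            div_nonpos_of_nonpos_of_nonneg (Dwc_empty_nonpos e' he') (hcpos e').le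
          have hR : (0 : ℝ) ≤ Dwc fex Uex 3 emptyPR / c 3 := by
            rw [Dwc_empty_3, hc3]
            positivity
          linarith
      · exact absurd fex_psi1.ge (not_le.mpr hlt')
  · -- Covers pgex
    intro φ hφ
    show (1 : ℝ) ≤ fex (finalPR pgex φ)
    rw [finalPR_pgex hφ, fex_psi1]
  · -- Covers psex
    intro φ hφ
    obtain ⟨j, rfl⟩ := phi_form hφ
    show (1 : ℝ) ≤ fex (finalPR psex (phiex j))
    rw [finalPR_psex, fex_psi2]
  · -- cost comparison
    have hg : cwc c Uex pgex = 2 * r + 1 := by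
      refine cwc_const c pgex _ (fun φ hφ => ?_)
      rw [finalPR_pgex hφ, costPR_psi1, hc3]
    have hs : cwc c Uex psex = 2 := by
      refine cwc_const c psex _ (fun φ hφ => ?_)
      obtain ⟨j, rfl⟩ := phi_form hφ
      rw [finalPR_psex, costPR_psi2]
      have h0 : c 0 = 1 := by simp [hc]
      have ht : c (tgt j) = 1 := by
        fin_cases j <;> simp [hc, tgt]
      rw [h0, ht]; norm_num
    rw [hg, hs]
    linarith

end WCAS
end
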